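/- Let G be a real symmetric positive definite k×k matrix and A a real antisymmetric k×k matrix. Then det(G + A) = det(G − A), and det(G + A) ≥ det(G) > 0. -/

import Mathlib

open Matrix

/-- det(1+Q) ≥ 1 for real PSD Q. -/
lemma aux_one_le_det_one_add {k : ℕ} {Q : Matrix (Fin k) (Fin k) ℝ}
    (hQ : Q.PosSemidef) : 1 ≤ (1 + Q).det := by
  set U : Matrix (Fin k) (Fin k) ℝ := (hQ.1.eigenvectorUnitary : Matrix (Fin k) (Fin k) ℝ)
  have hU : U * star U = 1 := (Matrix.mem_unitaryGroup_iff).mp hQ.1.eigenvectorUnitary.2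
  have hU' : star U * U = 1 := (Matrix.mem_unitaryGroup_iff').mp hQ.1.eigenvectorUnitary.2
  have hspec := hQ.1.spectral_theorem
  have h1Q : 1 + Q = U * (1 + diagonal (RCLike.ofReal ∘ hQ.1.eigenvalues)) * star U := by
    simp only [Unitary.conjStarAlgAut_apply] at hspec
    rw [mul_add, add_mul, mul_one, hU, ← hspec]
  rw [h1Q, Matrix.det_mul_comm, ← mul_assoc, hU', one_mul]
  have : (1 : Matrix (Fin k) (Fin k) ℝ) + diagonal (RCLike.ofReal ∘ hQ.1.eigenvalues)
      = diagonal (fun i => 1 + hQ.1.eigenvalues i) := by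
    rw [← diagonal_one, diagonal_add]
    congr 1
  rw [this, det_diagonal]
  calc (1:ℝ) = ∏ _i : Fin k, (1:ℝ) := by simp
  _ ≤ ∏ i, (1 + hQ.1.eigenvalues i) := by
    apply Finset.prod_le_prod (fun i _ => by norm_num)
    exact fun i _ => by linarith [hQ.eigenvalues_nonneg i]

/-- det(G'+A') > 0 for real PD G' and antisymmetric A'. -/
lemma aux_det_add_ne_zero {k : ℕ} {G A : Matrix (Fin k) (Fin k) ℝ}
    (hG : G.PosDef) (hA : Aᵀ = -A) : (G + A).det ≠ 0 := by
  intro h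
  obtain ⟨v, hv, hveq⟩ := (Matrix.exists_mulVec_eq_zero_iff).2 h
  have hAv : v ⬝ᵥ (A *ᵥ v) = 0 := by
    have h1 : v ⬝ᵥ (A *ᵥ v) = (Aᵀ *ᵥ v) ⬝ᵥ v := by
      rw [Matrix.dotProduct_mulVec, Matrix.mulVec_transpose]
    rw [hA, Matrix.neg_mulVec, neg_dotProduct, dotProduct_comm] at h1
    have h2 : (A *ᵥ v) ⬝ᵥ v = 0 := by linarith
    rw [dotProduct_comm]
    exact h2
  have hpos : 0 < v ⬝ᵥ (G *ᵥ v) := by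
    have := hG.dotProduct_mulVec_pos hv
    simpa using this
  have : v ⬝ᵥ ((G + A) *ᵥ v) = 0 := by rw [hveq, dotProduct_zero]
  rw [Matrix.add_mulVec, dotProduct_add, hAv, add_zero] at this
  linarith

lemma aux_det_add_pos {k : ℕ} {G A : Matrix (Fin k) (Fin k) ℝ}
    (hG : G.PosDef) (hA : Aᵀ = -A) : 0 < (G + A).det := by
  set f : ℝ → ℝ := fun t => (G + t • A).det with hf
  have hcont : Continuous f := by
    apply Continuous.matrix_det
    exact continuous_const.add (continuous_id.smul continuous_const)
  have hne : ∀ t, f t ≠ 0 := by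
    intro t
    exact aux_det_add_ne_zero hG (by rw [transpose_smul, hA, smul_neg])
  have hf0 : 0 < f 0 := by simpa [hf] using hG.det_pos
  have hf1 : f 1 ≠ 0 := hne 1
  by_contra hle
  push_neg at hle
  have hf1' : f 1 < 0 := lt_of_le_of_ne (by simpa [hf] using hle) hf1
  have : (0 : ℝ) ∈ Set.Icc (f 1) (f 0) := ⟨le_of_lt hf1', le_of_lt hf0⟩
  obtain ⟨t, _, ht⟩ := intermediate_value_Icc' (by norm_num : (0:ℝ) ≤ 1)
    (hcont.continuousOn) this
  exact hne t ht

open scoped MatrixOrder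

/-- For a real symmetric positive definite `k × k` matrix `G` and a real
antisymmetric `k × k` matrix `A`, one has `det (G + A) = det (G - A)` and
`det (G + A) ≥ det G > 0`. -/
theorem det_posDef_add_antisymm (k : ℕ) (G A : Matrix (Fin k) (Fin k) ℝ)
    (hG : G.PosDef) (hA : Aᵀ = -A) :
    (G + A).det = (G - A).det ∧ G.det ≤ (G + A).det ∧ 0 < G.det := by
  have hGsym : Gᵀ = G := by
    have := hG.1.eq
    rwa [conjTranspose_eq_transpose_of_trivial] at this
  have heq : (G + A).det = (G - A).det := by
    rw [← det_transpose (G + A), transpose_add, hGsym, hA, ← sub_eq_add_neg]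
  refine ⟨heq, ?_, hG.det_pos⟩
  -- square root of G
  set S : Matrix (Fin k) (Fin k) ℝ := CFC.sqrt G with hSdef
  have hSS : S * S = G := CFC.sqrt_mul_sqrt_self G hG.posSemidef.nonneg
  have hSpsd : S.PosSemidef := (CFC.sqrt_nonneg G).posSemidef
  have hSsym : Sᵀ = S := by
    have := hSpsd.1.eq
    rwa [conjTranspose_eq_transpose_of_trivial] at this
  have hdSnn : 0 ≤ S.det := by
    have h := hSpsd.1.det_eq_prod_eigenvalues
    simp only [RCLike.ofReal_real_eq_id, id] at h
    rw [h]
    exact Finset.prod_nonneg fun i _ => hSpsd.eigenvalues_nonneg i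
  have hdS2 : S.det * S.det = G.det := by rw [← det_mul, hSS]
  have hdSpos : 0 < S.det := by nlinarith [hG.det_pos]
  have hdSne : S.det ≠ 0 := ne_of_gt hdSpos
  have hSinv : S * S⁻¹ = 1 := mul_nonsing_inv S (isUnit_iff_ne_zero.mpr hdSne)
  have hSinv' : S⁻¹ * S = 1 := nonsing_inv_mul S (isUnit_iff_ne_zero.mpr hdSne)
  set M : Matrix (Fin k) (Fin k) ℝ := S⁻¹ * A * S⁻¹ with hMdef
  have hMa : Mᵀ = -M := by
    rw [hMdef, transpose_mul, transpose_mul, transpose_nonsing_inv, hSsym, hA]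
    noncomm_ring
  have hdecomp : G + A = S * (1 + M) * S := by
    rw [hMdef, mul_add, mul_one, add_mul, hSS]
    congr 1
    symm
    calc S * (S⁻¹ * A * S⁻¹) * S = (S * S⁻¹) * A * (S⁻¹ * S) := by noncomm_ring
      _ = A := by rw [hSinv, hSinv', one_mul, mul_one]
  have hdet : (G + A).det = S.det * (1 + M).det * S.det := by
    rw [hdecomp, det_mul, det_mul]
  -- det(1+M) ≥ 1
  have hMpos : 0 < (1 + M).det := aux_det_add_pos Matrix.PosDef.one hMa
  have hsq : (1 + M).det * (1 + M).det = (1 + M * Mᵀ).det := by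
    have h2 : (1 + M) * (1 + M)ᵀ = 1 + M * Mᵀ := by
      rw [transpose_add, transpose_one, hMa]
      noncomm_ring
    rw [← h2, det_mul, det_transpose]
  have hMMt : (M * Mᵀ).PosSemidef := by
    have := posSemidef_self_mul_conjTranspose M
    rwa [conjTranspose_eq_transpose_of_trivial] at this
  have h1le : 1 ≤ (1 + M).det := by
    nlinarith [aux_one_le_det_one_add hMMt]
  calc G.det = S.det * 1 * S.det := by rw [mul_one, hdS2]
  _ ≤ S.det * (1 + M).det * S.det := by nlinarith
  _ = (G + A).det := hdet.symm
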